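/- arXiv:math-ph/0604023 — 4 statements merged into one kernel-verified Lean document; each statement's English description precedes it below -/
import Mathlib

section
/- Let H be a Hilbert space, φ ∈ H a unit vector, A a subalgebra of bounded operators on H with commutant A', and L a self-adjoint operator on H. Suppose A'φ is dense in H, e^{iLτ} A e^{-iLτ} ⊆ A for all τ, Lφ = 0, and L has purely absolutely continuous spectrum on the orthogonal complement of φ. Then for every trace-class positive operator ρ with Tr ρ = 1 and every B ∈ A, lim_{τ→∞} Tr(ρ e^{iLτ} B e^{-iLτ}) = ⟨φ, Bφ⟩. -/
open Filter Topology MeasureTheory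

lemma myRL (f : ℝ → ℂ) :
    Tendsto (fun τ : ℝ => ∫ x : ℝ, Complex.exp (Complex.I * τ * x) * f x) atTop (𝓝 0) := by
  have h := Real.tendsto_integral_exp_smul_cocompact (E := ℂ) f
  have hmap : Tendsto (fun τ : ℝ => -τ / (2 * Real.pi)) atTop (cocompact ℝ) := by
    refine Tendsto.mono_right ?_ atBot_le_cocompact
    exact (tendsto_neg_atTop_atBot).atBot_div_const (by positivity)
  have h2 := h.comp hmap
  convert h2 using 2 with τ
  refine integral_congr_ae (Eventually.of_forall fun x => ?_)
  simp only [Function.comp, Circle.smul_def, Real.fourierChar_apply]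
  rw [smul_eq_mul]
  congr 1
  have hpi : (2 : ℝ) * Real.pi ≠ 0 := by positivity
  have hx : 2 * Real.pi * -(x * (-τ / (2 * Real.pi))) = τ * x := by field_simp
  rw [hx]; push_cast; ring

lemma dense_limit_ext {H : Type*} [NormedAddCommGroup H]
    {D : Set H} (hD : Dense D) (F : ℝ → H → ℂ) (L : H → ℂ) (M : ℝ) (hM : 0 ≤ M)
    (h1 : ∀ τ y z, ‖F τ y - F τ z‖ ≤ M * ‖y - z‖)
    (h2 : ∀ y z, ‖L y - L z‖ ≤ M * ‖y - z‖)
    (h3 : ∀ y ∈ D, Tendsto (fun τ => F τ y) atTop (𝓝 (L y)))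
    (y : H) : Tendsto (fun τ => F τ y) atTop (𝓝 (L y)) := by
  rw [Metric.tendsto_atTop]
  intro ε hε
  obtain ⟨y', hy'D, hy'⟩ := hD.exists_dist_lt y (show (0:ℝ) < ε / (4 * (M + 1)) by positivity)
  have h3' := h3 y' hy'D
  rw [Metric.tendsto_atTop] at h3'
  obtain ⟨N, hN⟩ := h3' (ε / 2) (by positivity)
  refine ⟨N, fun τ hτ => ?_⟩
  have d1 : dist (F τ y) (F τ y') ≤ M * dist y y' := by
    rw [dist_eq_norm, dist_eq_norm]; exact h1 τ y y'
  have d2 : dist (L y') (L y) ≤ M * dist y y' := by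
    rw [dist_comm, dist_eq_norm, dist_eq_norm]; exact h2 y y'
  have dδ : (0:ℝ) ≤ dist y y' := dist_nonneg
  have key : (M + 1) * dist y y' < (M + 1) * (ε / (4 * (M + 1))) :=
    mul_lt_mul_of_pos_left hy' (by positivity)
  have keq : (M + 1) * (ε / (4 * (M + 1))) = ε / 4 := by field_simp
  have hNτ := hN τ hτ
  calc dist (F τ y) (L y)
      ≤ dist (F τ y) (F τ y') + dist (F τ y') (L y') + dist (L y') (L y) :=
        dist_triangle4 _ _ _ _
    _ < ε := by nlinarith

/-- **Return to equilibrium lemma.** If `U` is a one-parameter unitary group on a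
Hilbert space `H` (generated by a self-adjoint `L`), `φ` is a unit vector invariant
under `U` (i.e. `Lφ = 0`), the spectrum of `L` is purely absolutely continuous on the
orthogonal complement of `φ` (encoded by: all spectral measures of vectors orthogonal
to `φ` have an integrable density, equivalently `⟨ψ, U τ χ⟩` is the Fourier transform
of an `L¹` function), `A` is a subalgebra of `B(H)` invariant under conjugation by `U`,
and `A'φ` is dense, then for any density matrix `ρ = ∑ pₙ |ψₙ⟩⟨ψₙ|` and any `B ∈ A`,
`Tr(ρ e^{iLτ} B e^{-iLτ}) → ⟨φ, Bφ⟩` as `τ → ∞`. -/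
theorem stmt0
    {H : Type*} [NormedAddCommGroup H] [InnerProductSpace ℂ H] [CompleteSpace H]
    (A : Subalgebra ℂ (H →L[ℂ] H)) (φ : H) (hφ : ‖φ‖ = 1)
    (U : ℝ → (H →L[ℂ] H))
    (hU0 : U 0 = 1)
    (hUadd : ∀ τ σ : ℝ, U (τ + σ) = U τ * U σ)
    (hUunitary : ∀ (τ : ℝ) (x y : H), (inner ℂ (U τ x) (U τ y) : ℂ) = inner ℂ x y)
    (hAinv : ∀ τ : ℝ, ∀ B ∈ A, U τ * B * U (-τ) ∈ A)
    (hφfix : ∀ τ : ℝ, U τ φ = φ)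
    (hac : ∀ ψ χ : H, (inner ℂ φ ψ : ℂ) = 0 → (inner ℂ φ χ : ℂ) = 0 →
      ∃ f : ℝ → ℂ, Integrable f ∧
        ∀ τ : ℝ, (inner ℂ ψ (U τ χ) : ℂ) = ∫ x : ℝ, Complex.exp (Complex.I * τ * x) * f x)
    (hdense : Dense {x : H | ∃ B' ∈ Subalgebra.centralizer ℂ (A : Set (H →L[ℂ] H)),
        x = B' φ})
    (p : ℕ → ℝ) (hp : ∀ n, 0 ≤ p n) (hptot : ∑' n, p n = 1)
    (ψ : ℕ → H) (hψ : ∀ n, ‖ψ n‖ = 1)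
    (B : H →L[ℂ] H) (hB : B ∈ A) :
    Tendsto (fun τ : ℝ => ∑' n, (p n : ℂ) * inner ℂ (ψ n) ((U τ * B * U (-τ)) (ψ n)))
      atTop (𝓝 (inner ℂ φ (B φ))) := by
  classical
  set c : ℂ := inner ℂ φ (B φ) with hc
  -- group facts
  have hUinvapply : ∀ τ : ℝ, ∀ x : H, U τ (U (-τ) x) = x := by
    intro τ x
    have : U τ * U (-τ) = 1 := by rw [← hUadd, add_neg_cancel, hU0]
    calc U τ (U (-τ) x) = (U τ * U (-τ)) x := rfl
      _ = x := by rw [this]; rfl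
  have hadj : ∀ τ : ℝ, ∀ x y : H, (inner ℂ (U τ x) y : ℂ) = inner ℂ x (U (-τ) y) := by
    intro τ x y
    conv_lhs => rw [← hUinvapply τ y]
    exact hUunitary τ x (U (-τ) y)
  have hnorm : ∀ τ : ℝ, ∀ x : H, ‖U τ x‖ = ‖x‖ := by
    intro τ x
    have h := hUunitary τ x x
    rw [inner_self_eq_norm_sq_to_K, inner_self_eq_norm_sq_to_K] at h
    have h2 : ‖U τ x‖ ^ 2 = ‖x‖ ^ 2 := by exact_mod_cast h
    nlinarith [norm_nonneg (U τ x), norm_nonneg x]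
  have hBτ : ∀ τ : ℝ, ∀ x : H, ‖(U τ * B * U (-τ)) x‖ ≤ ‖B‖ * ‖x‖ := by
    intro τ x
    calc ‖(U τ * B * U (-τ)) x‖ = ‖B (U (-τ) x)‖ := by
          simp only [ContinuousLinearMap.mul_apply]; rw [hnorm]
      _ ≤ ‖B‖ * ‖U (-τ) x‖ := B.le_opNorm _
      _ = ‖B‖ * ‖x‖ := by rw [hnorm]
  have hφφ : (inner ℂ φ φ : ℂ) = 1 := by
    rw [inner_self_eq_norm_sq_to_K, hφ]; norm_num
  have hφorthU : ∀ (χ : H) (τ : ℝ), (inner ℂ φ χ : ℂ) = 0 → (inner ℂ φ (U τ χ) : ℂ) = 0 := by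
    intro χ τ h
    have h2 := hadj (-τ) φ χ
    rw [neg_neg, hφfix] at h2
    rw [← h2, h]
  set η : H := B φ - c • φ with hη
  have hφη : (inner ℂ φ η : ℂ) = 0 := by
    simp [hη, inner_sub_right, inner_smul_right, hφφ, hc, hφ]
  have horth : ∀ ζ χ : H, (inner ℂ φ ζ : ℂ) = 0 → (inner ℂ φ χ : ℂ) = 0 →
      Tendsto (fun τ : ℝ => (inner ℂ ζ (U τ χ) : ℂ)) atTop (𝓝 0) := by
    intro ζ χ h1 h2
    obtain ⟨f, hf, hfe⟩ := hac ζ χ h1 h2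
    simp_rw [hfe]
    exact myRL f
  set S : Set H := {x : H | ∃ B' ∈ Subalgebra.centralizer ℂ (A : Set (H →L[ℂ] H)),
      x = B' φ} with hS
  -- key limit on the dense set S (both arguments)
  have keyD : ∀ x ∈ S, ∀ y ∈ S,
      Tendsto (fun τ : ℝ => (inner ℂ x ((U τ * B * U (-τ)) y) : ℂ)) atTop
        (𝓝 (c * inner ℂ x y)) := by
    rintro x ⟨B₁, hB₁, rfl⟩ y ⟨B₂, hB₂, rfl⟩
    set ζ : H := ContinuousLinearMap.adjoint B₂ (B₁ φ) with hζ
    set ζp : H := ζ - (inner ℂ φ ζ : ℂ) • φ with hζp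
    have hφζp : (inner ℂ φ ζp : ℂ) = 0 := by
      simp [hζp, inner_sub_right, inner_smul_right, hφφ, hφ]
    have heq : ∀ τ : ℝ, (inner ℂ (B₁ φ) ((U τ * B * U (-τ)) (B₂ φ)) : ℂ)
        = c * inner ℂ (B₁ φ) (B₂ φ) + inner ℂ ζp (U τ η) := by
      intro τ
      have hcomm : (U τ * B * U (-τ)) * B₂ = B₂ * (U τ * B * U (-τ)) := by
        have hm := hB₂
        rw [Subalgebra.mem_centralizer_iff] at hm
        exact hm _ (hAinv τ B hB)
      have e1 : (U τ * B * U (-τ)) (B₂ φ) = B₂ (U τ (B φ)) := by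
        have h3 := congrArg (fun T : H →L[ℂ] H => T φ) hcomm
        simp only [ContinuousLinearMap.mul_apply, hφfix] at h3
        exact h3
      rw [e1]
      have e2 : (inner ℂ (B₁ φ) (B₂ (U τ (B φ))) : ℂ) = inner ℂ ζ (U τ (B φ)) := by
        rw [hζ, ContinuousLinearMap.adjoint_inner_left]
      rw [e2]
      have e3 : B φ = c • φ + η := by rw [hη]; abel
      have e4 : U τ (B φ) = c • φ + U τ η := by
        rw [e3, map_add, ContinuousLinearMap.map_smul, hφfix]
      rw [e4, inner_add_right, inner_smul_right]
      have e5 : (inner ℂ ζ φ : ℂ) = inner ℂ (B₁ φ) (B₂ φ) := by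
        rw [hζ, ContinuousLinearMap.adjoint_inner_left]
      have e6 : (inner ℂ ζ (U τ η) : ℂ) = inner ℂ ζp (U τ η) := by
        have : ζ = ζp + (inner ℂ φ ζ : ℂ) • φ := by rw [hζp]; abel
        rw [this, inner_add_left, inner_smul_left, hφorthU η τ hφη]
        ring
      rw [e5, e6]
    simp_rw [heq]
    have h0 : Tendsto (fun τ : ℝ => c * inner ℂ (B₁ φ) (B₂ φ) + (inner ℂ ζp (U τ η) : ℂ))
        atTop (𝓝 (c * inner ℂ (B₁ φ) (B₂ φ) + 0)) :=
      Tendsto.add tendsto_const_nhds (horth ζp η hφζp hφη)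
    simpa using h0
  -- extension to all vectors by density
  have keyX : ∀ x ∈ S, ∀ y : H,
      Tendsto (fun τ : ℝ => (inner ℂ x ((U τ * B * U (-τ)) y) : ℂ)) atTop
        (𝓝 (c * inner ℂ x y)) := by
    intro x hx
    refine dense_limit_ext hdense _ _ (‖x‖ * (‖B‖ + ‖c‖)) (by positivity) ?_ ?_ ?_
    · intro τ y z
      rw [← inner_sub_right, ← map_sub]
      calc ‖(inner ℂ x ((U τ * B * U (-τ)) (y - z)) : ℂ)‖
          ≤ ‖x‖ * ‖(U τ * B * U (-τ)) (y - z)‖ := norm_inner_le_norm _ _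
        _ ≤ ‖x‖ * (‖B‖ * ‖y - z‖) :=
            mul_le_mul_of_nonneg_left (hBτ τ _) (norm_nonneg x)
        _ ≤ ‖x‖ * (‖B‖ + ‖c‖) * ‖y - z‖ := by
            nlinarith [mul_nonneg (mul_nonneg (norm_nonneg x) (norm_nonneg c)) (norm_nonneg (y - z)),
              mul_nonneg (mul_nonneg (norm_nonneg x) (norm_nonneg B)) (norm_nonneg (y - z))]
    · intro y z
      rw [← mul_sub, ← inner_sub_right]
      calc ‖c * (inner ℂ x (y - z) : ℂ)‖ = ‖c‖ * ‖(inner ℂ x (y - z) : ℂ)‖ := norm_mul _ _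
        _ ≤ ‖c‖ * (‖x‖ * ‖y - z‖) :=
            mul_le_mul_of_nonneg_left (norm_inner_le_norm _ _) (norm_nonneg c)
        _ ≤ ‖x‖ * (‖B‖ + ‖c‖) * ‖y - z‖ := by
            nlinarith [mul_nonneg (mul_nonneg (norm_nonneg x) (norm_nonneg c)) (norm_nonneg (y - z)),
              mul_nonneg (mul_nonneg (norm_nonneg x) (norm_nonneg B)) (norm_nonneg (y - z))]
    · intro y hy; exact keyD x hx y hy
  have keyXY : ∀ x y : H,
      Tendsto (fun τ : ℝ => (inner ℂ x ((U τ * B * U (-τ)) y) : ℂ)) atTop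
        (𝓝 (c * inner ℂ x y)) := by
    intro x y
    refine dense_limit_ext hdense (fun τ x => (inner ℂ x ((U τ * B * U (-τ)) y) : ℂ))
      (fun x => c * inner ℂ x y) (‖y‖ * (‖B‖ + ‖c‖)) (by positivity) ?_ ?_ ?_ x
    · intro τ x z
      rw [← inner_sub_left]
      calc ‖(inner ℂ (x - z) ((U τ * B * U (-τ)) y) : ℂ)‖
          ≤ ‖x - z‖ * ‖(U τ * B * U (-τ)) y‖ := norm_inner_le_norm _ _
        _ ≤ ‖x - z‖ * (‖B‖ * ‖y‖) :=
            mul_le_mul_of_nonneg_left (hBτ τ _) (norm_nonneg _)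
        _ ≤ ‖y‖ * (‖B‖ + ‖c‖) * ‖x - z‖ := by
            nlinarith [mul_nonneg (mul_nonneg (norm_nonneg y) (norm_nonneg c)) (norm_nonneg (x - z)),
              mul_nonneg (mul_nonneg (norm_nonneg y) (norm_nonneg B)) (norm_nonneg (x - z))]
    · intro x z
      rw [← mul_sub, ← inner_sub_left]
      calc ‖c * (inner ℂ (x - z) y : ℂ)‖ = ‖c‖ * ‖(inner ℂ (x - z) y : ℂ)‖ := norm_mul _ _
        _ ≤ ‖c‖ * (‖x - z‖ * ‖y‖) :=
            mul_le_mul_of_nonneg_left (norm_inner_le_norm _ _) (norm_nonneg c)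
        _ ≤ ‖y‖ * (‖B‖ + ‖c‖) * ‖x - z‖ := by
            nlinarith [mul_nonneg (mul_nonneg (norm_nonneg y) (norm_nonneg c)) (norm_nonneg (x - z)),
              mul_nonneg (mul_nonneg (norm_nonneg y) (norm_nonneg B)) (norm_nonneg (x - z))]
    · intro x hx; exact keyX x hx y
  -- assemble
  have hsum : Summable p := by
    by_contra hns
    rw [tsum_eq_zero_of_not_summable hns] at hptot
    norm_num at hptot
  have hterm : ∀ n, Tendsto
      (fun τ : ℝ => (p n : ℂ) * inner ℂ (ψ n) ((U τ * B * U (-τ)) (ψ n)))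
      atTop (𝓝 ((p n : ℂ) * c)) := by
    intro n
    have h := keyXY (ψ n) (ψ n)
    have h1 : (inner ℂ (ψ n) (ψ n) : ℂ) = 1 := by
      rw [inner_self_eq_norm_sq_to_K, hψ]; norm_num
    rw [h1, mul_one] at h
    exact h.const_mul _
  have hbound : ∀ (τ : ℝ) (n : ℕ),
      ‖(p n : ℂ) * inner ℂ (ψ n) ((U τ * B * U (-τ)) (ψ n))‖ ≤ p n * ‖B‖ := by
    intro τ n
    rw [norm_mul, Complex.norm_real, Real.norm_eq_abs, abs_of_nonneg (hp n)]
    refine mul_le_mul_of_nonneg_left ?_ (hp n)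
    calc ‖(inner ℂ (ψ n) ((U τ * B * U (-τ)) (ψ n)) : ℂ)‖
        ≤ ‖ψ n‖ * ‖(U τ * B * U (-τ)) (ψ n)‖ := norm_inner_le_norm _ _
      _ ≤ ‖ψ n‖ * (‖B‖ * ‖ψ n‖) :=
          mul_le_mul_of_nonneg_left (hBτ τ _) (norm_nonneg _)
      _ = ‖B‖ := by rw [hψ]; ring
  have hmain := tendsto_tsum_of_dominated_convergence
    (f := fun (τ : ℝ) (n : ℕ) => (p n : ℂ) * inner ℂ (ψ n) ((U τ * B * U (-τ)) (ψ n)))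
    (g := fun n => (p n : ℂ) * c) (bound := fun n => p n * ‖B‖)
    (hsum.mul_right ‖B‖) hterm (Eventually.of_forall hbound)
  have hval : (∑' n, (p n : ℂ) * c) = c := by
    rw [tsum_mul_right, ← Complex.ofReal_tsum, hptot, Complex.ofReal_one, one_mul]
  rw [hval] at hmain
  exact hmain
end

section
/- The linear span of the functions y ↦ (1+y²)^{-n}, for n = 1, 2, 3, …, is dense in the subspace of even functions in L²(ℝ). -/
open MeasureTheory

lemma weight_memLp : MemLp (fun y : ℝ => ((1 + y ^ 2) : ℝ)⁻¹) 2 (volume : Measure ℝ) := by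
  have hcont : Continuous fun y : ℝ => ((1 + y ^ 2) : ℝ)⁻¹ := by
    apply Continuous.inv₀ (by continuity)
    intro y; positivity
  rw [memLp_two_iff_integrable_sq hcont.aestronglyMeasurable]
  apply integrable_inv_one_add_sq.mono (hcont.pow 2).aestronglyMeasurable
  filter_upwards with y
  have h1 : (0:ℝ) < 1 + y ^ 2 := by positivity
  have h2 : ((1 + y ^ 2) : ℝ)⁻¹ ≤ 1 := by
    rw [inv_le_one_iff₀]; right; nlinarith
  have h3 : (0:ℝ) ≤ ((1 + y ^ 2) : ℝ)⁻¹ := by positivity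
  simp only [Pi.pow_apply]
  rw [Real.norm_eq_abs, Real.norm_eq_abs, abs_of_nonneg (by positivity), abs_of_nonneg h3]
  nlinarith

/-- The linear span of the functions `y ↦ (1+y²)⁻ⁿ`, `n = 1, 2, 3, …`, is dense in the
subspace of even functions in `L²(ℝ)`: every even square-integrable function can be
approximated in the `L²` norm by elements of the span. -/
theorem stmt2 (f : ℝ → ℝ)
    (hf : MemLp f 2 (volume : Measure ℝ))
    (heven : ∀ᵐ y : ℝ, f (-y) = f y) :
    ∀ ε : ℝ, 0 < ε →
      ∃ g ∈ Submodule.span ℝ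
          (Set.range fun n : ℕ => fun y : ℝ => ((1 + y ^ 2) ^ (n + 1) : ℝ)⁻¹),
        eLpNorm (f - g) 2 (volume : Measure ℝ) < ENNReal.ofReal ε := by
  intro ε hε
  -- the weight function
  set w : ℝ → ℝ := fun y => ((1 + y ^ 2) : ℝ)⁻¹ with hw_def
  have hw := weight_memLp
  set C : ENNReal := eLpNorm w 2 volume with hC_def
  have hC : C ≠ ⊤ := hw.2.ne
  -- Step 1: continuous compactly supported approximation
  obtain ⟨h, h_supp, h_close, h_cont, -⟩ :=
    hf.exists_hasCompactSupport_eLpNorm_sub_le (by norm_num)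
      (ε := ENNReal.ofReal (ε / 2)) (by simp [ENNReal.ofReal_eq_zero, not_le, half_pos hε])
  -- Step 2: symmetrize
  set he : ℝ → ℝ := fun y => (h y + h (-y)) / 2 with he_def
  have he_cont : Continuous he := by
    apply Continuous.div_const
    exact h_cont.add (h_cont.comp continuous_neg)
  have he_even : ∀ y : ℝ, he (-y) = he y := by
    intro y; simp only [he_def, neg_neg]; ring
  have h1 : eLpNorm (f - he) 2 volume ≤ ENNReal.ofReal (ε / 2) := by
    set u : ℝ → ℝ := f - h with hu_def
    have hu_meas : AEStronglyMeasurable u volume :=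
      hf.aestronglyMeasurable.sub h_cont.aestronglyMeasurable
    have hneg : MeasurePreserving (fun x : ℝ => -x) volume volume :=
      Measure.measurePreserving_neg _
    have hun_meas : AEStronglyMeasurable (u ∘ (fun x : ℝ => -x)) volume :=
      hu_meas.comp_measurePreserving hneg
    have heq : f - he =ᵐ[volume] (2⁻¹ : ℝ) • (u + u ∘ (fun x : ℝ => -x)) := by
      filter_upwards [heven] with y hy
      simp only [Pi.sub_apply, Pi.smul_apply, Pi.add_apply, Function.comp_apply, hu_def,
        he_def, smul_eq_mul]
      rw [← hy]; ring
    rw [eLpNorm_congr_ae heq, eLpNorm_const_smul]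
    have hadd : eLpNorm (u + u ∘ (fun x : ℝ => -x)) 2 volume ≤
        eLpNorm u 2 volume + eLpNorm (u ∘ (fun x : ℝ => -x)) 2 volume :=
      eLpNorm_add_le hu_meas hun_meas (by norm_num)
    have hcomp : eLpNorm (u ∘ (fun x : ℝ => -x)) 2 volume = eLpNorm u 2 volume :=
      eLpNorm_comp_measurePreserving hu_meas hneg
    rw [hcomp] at hadd
    calc (‖(2⁻¹ : ℝ)‖₊ : ENNReal) * eLpNorm (u + u ∘ (fun x : ℝ => -x)) 2 volume
        ≤ (‖(2⁻¹ : ℝ)‖₊ : ENNReal) * (eLpNorm u 2 volume + eLpNorm u 2 volume) := by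
          exact mul_le_mul_right hadd _
      _ = eLpNorm u 2 volume := by
          rw [← two_mul, ← mul_assoc]
          have : (‖(2⁻¹ : ℝ)‖₊ : ENNReal) = 2⁻¹ := by
            rw [nnnorm_inv, ENNReal.coe_inv (by norm_num)]
            norm_num
          rw [this, ENNReal.inv_mul_cancel (by norm_num) (by norm_num), one_mul]
      _ ≤ ENNReal.ofReal (ε / 2) := h_close
  -- Step 3: radius of support
  obtain ⟨R, hR0, hR⟩ := h_supp.exists_pos_le_norm
  have he_zero : ∀ x : ℝ, R ≤ |x| → he x = 0 := by
    intro x hx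
    have h1 := hR x (by rwa [Real.norm_eq_abs])
    have h2 := hR (-x) (by rwa [Real.norm_eq_abs, abs_neg])
    simp [he_def, h1, h2]
  -- Step 4: the continuous function on [0,1]
  set K : ℝ → ℝ := fun s => he (Real.sqrt s) with hK_def
  have hK_cont : Continuous K := he_cont.comp Real.continuous_sqrt
  have hKy : ∀ y : ℝ, K (y ^ 2) = he y := by
    intro y
    simp only [hK_def, Real.sqrt_sq_eq_abs]
    rcases abs_choice y with h' | h'
    · rw [h']
    · rw [h', he_even]
  set F : ℝ → ℝ := fun t => K (t⁻¹ - 1) * t⁻¹ with hF_def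
  set δ : ℝ := (1 + R ^ 2)⁻¹ with hδ_def
  have hδ0 : 0 < δ := by positivity
  have hF0 : ∀ t ∈ Set.Ico (0:ℝ) δ, F t = 0 := by
    rintro t ⟨ht0, htδ⟩
    rcases eq_or_lt_of_le ht0 with h' | h'
    · simp [hF_def, ← h']
    · have hinv : 1 + R ^ 2 < t⁻¹ := by
        rw [hδ_def] at htδ
        rw [← inv_inv (1 + R ^ 2)]
        exact inv_strictAnti₀ h' htδ
      have hsq : R ^ 2 ≤ t⁻¹ - 1 := by linarith
      have hsqrt : R ≤ Real.sqrt (t⁻¹ - 1) := by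
        calc R = Real.sqrt (R ^ 2) := (Real.sqrt_sq hR0.le).symm
          _ ≤ Real.sqrt (t⁻¹ - 1) := Real.sqrt_le_sqrt hsq
      have : K (t⁻¹ - 1) = 0 := by
        apply he_zero
        rwa [abs_of_nonneg (Real.sqrt_nonneg _)]
      simp [hF_def, this]
  have hF_cont : ContinuousOn F (Set.Icc (0:ℝ) 1) := by
    intro t ht
    rcases eq_or_ne t 0 with rfl | ht0
    · apply ContinuousWithinAt.congr_of_eventuallyEq
        (continuousWithinAt_const (b := (0:ℝ)))
      · have hmem : Set.Iio δ ∈ nhdsWithin (0:ℝ) (Set.Icc 0 1) :=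
          nhdsWithin_le_nhds (Iio_mem_nhds hδ0)
        filter_upwards [hmem, self_mem_nhdsWithin] with t h1 h2
        exact hF0 t ⟨h2.1, h1⟩
      · exact hF0 0 ⟨le_refl _, hδ0⟩
    · apply ContinuousAt.continuousWithinAt
      have hinv : ContinuousAt (fun t : ℝ => t⁻¹) t := continuousAt_inv₀ ht0
      exact (hK_cont.continuousAt.comp (hinv.sub continuousAt_const)).mul hinv
  -- Step 5: Weierstrass
  set c : ℝ := C.toReal with hc_def
  have hc0 : 0 ≤ c := ENNReal.toReal_nonneg
  set ε' : ℝ := (ε / 2) / (c + 1) with hε'_def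
  have hε'0 : 0 < ε' := by positivity
  obtain ⟨p, hp⟩ := exists_polynomial_near_of_continuousOn 0 1 F hF_cont ε' hε'0
  set g : ℝ → ℝ := fun y => p.eval ((1 + y ^ 2) : ℝ)⁻¹ * ((1 + y ^ 2) : ℝ)⁻¹ with hg_def
  -- membership in the span
  have hg_mem : g ∈ Submodule.span ℝ
      (Set.range fun n : ℕ => fun y : ℝ => ((1 + y ^ 2) ^ (n + 1) : ℝ)⁻¹) := by
    have hg_eq : g = ∑ k ∈ Finset.range (p.natDegree + 1),
        p.coeff k • (fun y : ℝ => ((1 + y ^ 2) ^ (k + 1) : ℝ)⁻¹) := by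
      funext y
      rw [Finset.sum_apply]
      simp only [hg_def, Pi.smul_apply, smul_eq_mul]
      rw [Polynomial.eval_eq_sum_range, Finset.sum_mul]
      apply Finset.sum_congr rfl
      intro k _
      rw [mul_assoc, ← pow_succ, inv_pow]
    rw [hg_eq]
    apply Submodule.sum_mem
    intro k _
    exact Submodule.smul_mem _ _ (Submodule.subset_span ⟨k, rfl⟩)
  -- pointwise bound
  have hpt : ∀ y : ℝ, |he y - g y| ≤ ε' * ((1 + y ^ 2) : ℝ)⁻¹ := by
    intro y
    set t : ℝ := ((1 + y ^ 2) : ℝ)⁻¹ with ht_def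
    have hy1 : (0:ℝ) < 1 + y ^ 2 := by positivity
    have ht0 : 0 < t := by positivity
    have ht1 : t ≤ 1 := by
      rw [ht_def, inv_le_one_iff₀]; right; nlinarith
    have htinv : t⁻¹ = 1 + y ^ 2 := by rw [ht_def, inv_inv]
    have hFt : F t = he y * t⁻¹ := by
      show K (t⁻¹ - 1) * t⁻¹ = he y * t⁻¹
      have : t⁻¹ - 1 = y ^ 2 := by rw [htinv]; ring
      rw [this, hKy]
    have hhe : he y = F t * t := by
      rw [hFt, mul_assoc, inv_mul_cancel₀ ht0.ne', mul_one]
    have hbound := hp t ⟨ht0.le, ht1⟩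
    calc |he y - g y| = |F t - p.eval t| * t := by
          rw [hhe, hg_def]
          rw [← sub_mul, abs_mul, abs_of_nonneg ht0.le]
      _ ≤ ε' * t := by
          apply mul_le_mul_of_nonneg_right _ ht0.le
          rw [abs_sub_comm]
          exact hbound.le
  -- L² bound for the second piece
  have h2 : eLpNorm (he - g) 2 volume < ENNReal.ofReal (ε / 2) := by
    have hmono : eLpNorm (he - g) 2 volume ≤ eLpNorm ((ε' : ℝ) • w) 2 volume := by
      apply eLpNorm_mono
      intro y
      simp only [Pi.sub_apply, Pi.smul_apply, smul_eq_mul, Real.norm_eq_abs]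
      rw [abs_mul, abs_of_pos hε'0, abs_of_nonneg (by positivity : (0:ℝ) ≤ w y)]
      exact hpt y
    rw [eLpNorm_const_smul] at hmono
    have hnn : ‖ε'‖ₑ = ENNReal.ofReal ε' := by
      rw [← ofReal_norm_eq_enorm, Real.norm_eq_abs, abs_of_pos hε'0]
    rw [hnn] at hmono
    calc eLpNorm (he - g) 2 volume ≤ ENNReal.ofReal ε' * C := hmono
      _ = ENNReal.ofReal (ε' * c) := by
          rw [← ENNReal.ofReal_toReal hC, ← hc_def, ← ENNReal.ofReal_mul hε'0.le]
      _ < ENNReal.ofReal (ε / 2) := by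
          rw [ENNReal.ofReal_lt_ofReal_iff (half_pos hε)]
          rw [hε'_def, div_mul_eq_mul_div, div_lt_iff₀ (by positivity)]
          nlinarith [half_pos hε]
  -- conclusion
  refine ⟨g, hg_mem, ?_⟩
  have hsplit : f - g = (f - he) + (he - g) := by ring
  have hmeas1 : AEStronglyMeasurable (f - he) volume :=
    hf.aestronglyMeasurable.sub he_cont.aestronglyMeasurable
  have hw_cont : Continuous w := by
    apply Continuous.inv₀ (by continuity)
    intro y; positivity
  have hmeas2 : AEStronglyMeasurable (he - g) volume := by
    apply Continuous.aestronglyMeasurable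
    exact he_cont.sub ((p.continuous.comp hw_cont).mul hw_cont)
  calc eLpNorm (f - g) 2 volume
      ≤ eLpNorm (f - he) 2 volume + eLpNorm (he - g) 2 volume := by
        rw [hsplit]; exact eLpNorm_add_le hmeas1 hmeas2 (by norm_num)
    _ < ENNReal.ofReal (ε / 2) + ENNReal.ofReal (ε / 2) :=
        ENNReal.add_lt_add_of_le_of_lt (h1.trans_lt ENNReal.ofReal_lt_top).ne h1 h2
    _ = ENNReal.ofReal ε := by
        rw [← ENNReal.ofReal_add (by positivity) (by positivity)]
        norm_num
end

section
/- Let f : ℝ → ℂ be continuous and integrable with (1+y²)^{-1/2} f(y) ∈ L²(ℝ), and suppose that ∫_ℝ (1+y²)^{-n-1/2} f(y) dy = 0 for all n = 0, 1, 2, …. Then the even part of f vanishes: f(y) + f(-y) = 0 for all y. -/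
open MeasureTheory Polynomial

namespace Stmt3Aux

lemma base_pos (y : ℝ) : (0:ℝ) < 1 + y ^ 2 := by positivity
lemma base_one_le (y : ℝ) : (1:ℝ) ≤ 1 + y ^ 2 := by nlinarith [sq_nonneg y]

lemma pow_mul_w (y : ℝ) (k : ℕ) :
    ((1 + y ^ 2 : ℝ)⁻¹) ^ k * (1 + y ^ 2 : ℝ) ^ (-(1:ℝ) / 2)
      = (1 + y ^ 2 : ℝ) ^ (-(k : ℝ) - 1 / 2) := by
  have h := base_pos y
  rw [show -(k:ℝ) - 1/2 = -(k:ℝ) + (-(1:ℝ)/2) by ring, Real.rpow_add h,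
    Real.rpow_neg h.le, Real.rpow_natCast, inv_pow]

lemma mem_Icc_u (y : ℝ) : (1 + y ^ 2 : ℝ)⁻¹ ∈ Set.Icc (0:ℝ) 1 := by
  constructor
  · positivity
  · rw [inv_le_one_iff₀]; right; exact base_one_le y

lemma w_le_one (y : ℝ) (e : ℝ) (he : e ≤ 0) : (1 + y ^ 2 : ℝ) ^ e ≤ 1 :=
  Real.rpow_le_one_of_one_le_of_nonpos (base_one_le y) he

lemma w_nonneg (y : ℝ) (e : ℝ) : 0 ≤ (1 + y ^ 2 : ℝ) ^ e :=
  Real.rpow_nonneg (base_pos y).le e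

lemma sqrt_mul_w (y : ℝ) :
    Real.sqrt (1 + y ^ 2) * (1 + y ^ 2 : ℝ) ^ (-(1:ℝ) / 2) = 1 := by
  have h := base_pos y
  rw [Real.sqrt_eq_rpow, ← Real.rpow_add h]
  norm_num

end Stmt3Aux

open Stmt3Aux

/-- Vanishing of all the moments `∫ (1+y²)^{-n-1/2} f(y) dy`, `n = 0, 1, 2, …`, of a
continuous integrable function `f` with `(1+y²)^{-1/2} f ∈ L²(ℝ)` forces the even part
of `f` to vanish: `f(y) + f(-y) = 0` for all `y`. -/
theorem stmt3 (f : ℝ → ℂ) (hcont : Continuous f)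
    (hint : Integrable f)
    (hL2 : MemLp (fun y : ℝ => (((1 + y ^ 2 : ℝ) ^ (-(1 : ℝ) / 2) : ℝ) : ℂ) * f y) 2
      (volume : Measure ℝ))
    (hmom : ∀ n : ℕ,
      ∫ y : ℝ, (((1 + y ^ 2 : ℝ) ^ (-(n : ℝ) - 1 / 2) : ℝ) : ℂ) * f y = 0) :
    ∀ y : ℝ, f y + f (-y) = 0 := by
  set h : ℝ → ℂ := fun y => f y + f (-y) with hh
  have hconth : Continuous h := hcont.add (hcont.comp continuous_neg)
  have hinth : Integrable h := hint.add hint.comp_neg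
  have heven : ∀ y, h (-y) = h y := by intro y; simp [hh, add_comm]
  -- bounded continuous real multiplier times h is integrable
  have key_int : ∀ (c : ℝ → ℝ) (B : ℝ), Continuous c → (∀ y, |c y| ≤ B) →
      Integrable fun y => (c y : ℂ) * h y := by
    intro c B hc hB
    refine hinth.bdd_mul (c := B) ((Complex.continuous_ofReal.comp hc).aestronglyMeasurable)
      (ae_of_all _ fun y => by simpa using hB y)
  have key_intf : ∀ (c : ℝ → ℝ), Continuous c → (∀ y, |c y| ≤ 1) →
      Integrable fun y => (c y : ℂ) * f y := by
    intro c hc hB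
    refine hint.bdd_mul (c := 1) ((Complex.continuous_ofReal.comp hc).aestronglyMeasurable)
      (ae_of_all _ fun y => by simpa using hB y)
  -- weight functions
  have wcont : ∀ e : ℝ, Continuous fun y : ℝ => (1 + y ^ 2 : ℝ) ^ e := by
    intro e
    exact (continuous_const.add (continuous_pow 2)).rpow_const
      (fun y => Or.inl (base_pos y).ne')
  -- moments of h vanish
  have hmomh : ∀ n : ℕ,
      ∫ y : ℝ, (((1 + y ^ 2 : ℝ) ^ (-(n : ℝ) - 1 / 2) : ℝ) : ℂ) * h y = 0 := by
    intro n
    have hW : ∀ y : ℝ, |(1 + y ^ 2 : ℝ) ^ (-(n : ℝ) - 1 / 2)| ≤ 1 := by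
      intro y
      rw [abs_of_nonneg (w_nonneg y _)]
      refine w_le_one y _ (by have := Nat.cast_nonneg (α := ℝ) n; linarith)
    have hWc : Continuous fun y : ℝ => (1 + y ^ 2 : ℝ) ^ (-(n : ℝ) - 1 / 2) := wcont _
    have h1 : Integrable fun y : ℝ =>
        (((1 + y ^ 2 : ℝ) ^ (-(n : ℝ) - 1 / 2) : ℝ) : ℂ) * f y := key_intf _ hWc hW
    have h2 : Integrable fun y : ℝ =>
        (((1 + y ^ 2 : ℝ) ^ (-(n : ℝ) - 1 / 2) : ℝ) : ℂ) * f (-y) := by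
      have := (key_intf _ hWc hW).comp_neg
      simpa [neg_pow] using this
    have hsplit : (∫ y : ℝ, (((1 + y ^ 2 : ℝ) ^ (-(n : ℝ) - 1 / 2) : ℝ) : ℂ) * h y)
        = (∫ y : ℝ, (((1 + y ^ 2 : ℝ) ^ (-(n : ℝ) - 1 / 2) : ℝ) : ℂ) * f y)
          + ∫ y : ℝ, (((1 + y ^ 2 : ℝ) ^ (-(n : ℝ) - 1 / 2) : ℝ) : ℂ) * f (-y) := by
      rw [← integral_add h1 h2]
      simp [hh, mul_add]
    have hneg : (∫ y : ℝ, (((1 + y ^ 2 : ℝ) ^ (-(n : ℝ) - 1 / 2) : ℝ) : ℂ) * f (-y))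
        = ∫ y : ℝ, (((1 + y ^ 2 : ℝ) ^ (-(n : ℝ) - 1 / 2) : ℝ) : ℂ) * f y := by
      rw [← integral_neg_eq_self
        (fun y : ℝ => (((1 + y ^ 2 : ℝ) ^ (-(n : ℝ) - 1 / 2) : ℝ) : ℂ) * f y) volume]
      simp [neg_pow]
    rw [hsplit, hneg, hmom n]
    simp
  -- polynomial moments
  have hpoly : ∀ p : ℝ[X],
      ∫ y : ℝ, ((p.eval ((1 + y ^ 2 : ℝ)⁻¹) : ℝ) : ℂ)
        * (((1 + y ^ 2 : ℝ) ^ (-(1:ℝ) / 2) : ℝ) : ℂ) * h y = 0 := by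
    intro p
    have hWint : ∀ k : ℕ, Integrable fun y : ℝ =>
        (((1 + y ^ 2 : ℝ) ^ (-(k : ℝ) - 1 / 2) : ℝ) : ℂ) * h y := by
      intro k
      refine key_int _ 1 (wcont _) fun y => ?_
      rw [abs_of_nonneg (w_nonneg y _)]
      refine w_le_one y _ (by have := Nat.cast_nonneg (α := ℝ) k; linarith)
    have hrw : ∀ y : ℝ, ((p.eval ((1 + y ^ 2 : ℝ)⁻¹) : ℝ) : ℂ)
        * (((1 + y ^ 2 : ℝ) ^ (-(1:ℝ) / 2) : ℝ) : ℂ) * h y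
        = ∑ k ∈ Finset.range (p.natDegree + 1),
            (p.coeff k : ℂ) * ((((1 + y ^ 2 : ℝ) ^ (-(k : ℝ) - 1 / 2) : ℝ) : ℂ) * h y) := by
      intro y
      rw [Polynomial.eval_eq_sum_range]
      push_cast
      rw [Finset.sum_mul, Finset.sum_mul]
      refine Finset.sum_congr rfl fun k _ => ?_
      rw [← pow_mul_w y k]
      push_cast
      ring
    calc (∫ y : ℝ, ((p.eval ((1 + y ^ 2 : ℝ)⁻¹) : ℝ) : ℂ)
        * (((1 + y ^ 2 : ℝ) ^ (-(1:ℝ) / 2) : ℝ) : ℂ) * h y)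
        = ∫ y : ℝ, ∑ k ∈ Finset.range (p.natDegree + 1),
            (p.coeff k : ℂ) * ((((1 + y ^ 2 : ℝ) ^ (-(k : ℝ) - 1 / 2) : ℝ) : ℂ) * h y) := by
          simp_rw [hrw]
      _ = ∑ k ∈ Finset.range (p.natDegree + 1),
            ∫ y : ℝ, (p.coeff k : ℂ) * ((((1 + y ^ 2 : ℝ) ^ (-(k : ℝ) - 1 / 2) : ℝ) : ℂ) * h y) :=
          integral_finset_sum _ fun k _ => (hWint k).const_mul _
      _ = 0 := by
          refine Finset.sum_eq_zero fun k _ => ?_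
          rw [MeasureTheory.integral_const_mul, hmomh k, mul_zero]
  -- continuous functions on [0,1] annihilate the measure w·h dy
  have ucont : Continuous fun y : ℝ => (1 + y ^ 2 : ℝ)⁻¹ :=
    (continuous_const.add (continuous_pow 2)).inv₀ fun y => (base_pos y).ne'
  have hPhi : ∀ Φ : ℝ → ℝ, ContinuousOn Φ (Set.Icc 0 1) →
      (∫ y : ℝ, ((Φ ((1 + y ^ 2 : ℝ)⁻¹) : ℝ) : ℂ)
        * (((1 + y ^ 2 : ℝ) ^ (-(1:ℝ) / 2) : ℝ) : ℂ) * h y) = 0 := by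
    intro Φ hΦ
    set J := ∫ y : ℝ, ((Φ ((1 + y ^ 2 : ℝ)⁻¹) : ℝ) : ℂ)
        * (((1 + y ^ 2 : ℝ) ^ (-(1:ℝ) / 2) : ℝ) : ℂ) * h y with hJdef
    set c : ℝ := ∫ y : ℝ, ‖h y‖ with hcdef
    have hc0 : 0 ≤ c := integral_nonneg fun y => norm_nonneg _
    -- generic integrability of (q ∘ u) * w * h for q continuous on [0,1]
    have genint : ∀ q : ℝ → ℝ, ContinuousOn q (Set.Icc 0 1) →
        Integrable fun y : ℝ => ((q ((1 + y ^ 2 : ℝ)⁻¹) : ℝ) : ℂ)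
          * (((1 + y ^ 2 : ℝ) ^ (-(1:ℝ) / 2) : ℝ) : ℂ) * h y := by
      intro q hq
      obtain ⟨C, hC⟩ := isCompact_Icc.exists_bound_of_continuousOn hq
      have : Integrable fun y : ℝ =>
          ((q ((1 + y ^ 2 : ℝ)⁻¹) * ((1 + y ^ 2 : ℝ) ^ (-(1:ℝ) / 2)) : ℝ) : ℂ) * h y := by
        refine key_int _ C (((hq.comp_continuous ucont mem_Icc_u)).mul (wcont _)) fun y => ?_
        rw [abs_mul, abs_of_nonneg (w_nonneg y _)]
        calc |q ((1 + y ^ 2 : ℝ)⁻¹)| * (1 + y ^ 2 : ℝ) ^ (-(1:ℝ)/2)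
            ≤ C * 1 := by
              refine mul_le_mul ?_ (w_le_one y _ (by norm_num)) (w_nonneg y _) ?_
              · simpa using hC _ (mem_Icc_u y)
              · exact le_trans (abs_nonneg _) (by simpa using hC _ (mem_Icc_u y))
          _ = C := mul_one C
      have heq : (fun y : ℝ => ((q ((1 + y ^ 2 : ℝ)⁻¹) : ℝ) : ℂ)
          * (((1 + y ^ 2 : ℝ) ^ (-(1:ℝ) / 2) : ℝ) : ℂ) * h y)
          = fun y : ℝ => ((q ((1 + y ^ 2 : ℝ)⁻¹) * ((1 + y ^ 2 : ℝ) ^ (-(1:ℝ) / 2)) : ℝ) : ℂ)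
            * h y := by
        funext y; push_cast; ring
      rw [heq]; exact this
    have hJle : ∀ ε : ℝ, 0 < ε → ‖J‖ ≤ ε * c := by
      intro ε hε
      obtain ⟨p, hp⟩ := exists_polynomial_near_of_continuousOn 0 1 Φ hΦ ε hε
      have hpc : ContinuousOn (fun x => p.eval x) (Set.Icc (0:ℝ) 1) :=
        (Polynomial.continuous p).continuousOn
      have hint1 := genint Φ hΦ
      have hint2 := genint (fun x => Polynomial.eval x p) hpc
      have hJ2 : J = ∫ y : ℝ, (((Φ ((1 + y ^ 2 : ℝ)⁻¹) - p.eval ((1 + y ^ 2 : ℝ)⁻¹)) : ℝ) : ℂ)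
          * (((1 + y ^ 2 : ℝ) ^ (-(1:ℝ) / 2) : ℝ) : ℂ) * h y := by
        rw [hJdef, ← sub_zero (∫ y : ℝ, ((Φ ((1 + y ^ 2 : ℝ)⁻¹) : ℝ) : ℂ)
          * (((1 + y ^ 2 : ℝ) ^ (-(1:ℝ) / 2) : ℝ) : ℂ) * h y), ← hpoly p,
          ← integral_sub hint1 hint2]
        congr 1; funext y; push_cast; ring
      rw [hJ2]
      have hintdiff : Integrable fun y : ℝ =>
          (((Φ ((1 + y ^ 2 : ℝ)⁻¹) - p.eval ((1 + y ^ 2 : ℝ)⁻¹)) : ℝ) : ℂ)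
          * (((1 + y ^ 2 : ℝ) ^ (-(1:ℝ) / 2) : ℝ) : ℂ) * h y := genint (fun x => Φ x - Polynomial.eval x p) (hΦ.sub hpc)
      calc ‖∫ y : ℝ, (((Φ ((1 + y ^ 2 : ℝ)⁻¹) - p.eval ((1 + y ^ 2 : ℝ)⁻¹)) : ℝ) : ℂ)
          * (((1 + y ^ 2 : ℝ) ^ (-(1:ℝ) / 2) : ℝ) : ℂ) * h y‖
          ≤ ∫ y : ℝ, ε * ‖h y‖ := by
            refine norm_integral_le_of_norm_le (hinth.norm.const_mul ε) ?_
            filter_upwards with y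
            rw [norm_mul, norm_mul]
            have h1 : ‖(((Φ ((1 + y ^ 2 : ℝ)⁻¹) - p.eval ((1 + y ^ 2 : ℝ)⁻¹)) : ℝ) : ℂ)‖ ≤ ε := by
              rw [Complex.norm_real, Real.norm_eq_abs, abs_sub_comm]
              exact (hp _ (mem_Icc_u y)).le
            have h2 : ‖(((1 + y ^ 2 : ℝ) ^ (-(1:ℝ) / 2) : ℝ) : ℂ)‖ ≤ 1 := by
              rw [Complex.norm_real, Real.norm_eq_abs, abs_of_nonneg (w_nonneg y _)]
              exact w_le_one y _ (by norm_num)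
            calc ‖(((Φ ((1 + y ^ 2 : ℝ)⁻¹) - p.eval ((1 + y ^ 2 : ℝ)⁻¹)) : ℝ) : ℂ)‖
                * ‖(((1 + y ^ 2 : ℝ) ^ (-(1:ℝ) / 2) : ℝ) : ℂ)‖ * ‖h y‖
                ≤ ε * 1 * ‖h y‖ := by
                  gcongr <;> first
                    | exact le_trans (norm_nonneg _) h1
                    | exact h1
                    | exact h2
              _ = ε * ‖h y‖ := by ring
        _ = ε * c := by rw [MeasureTheory.integral_const_mul]
    have : ‖J‖ ≤ 0 := by
      refine le_of_forall_pos_le_add fun ε hε => ?_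
      have h1 := hJle (ε / (c + 1)) (by positivity)
      have : ε / (c + 1) * c ≤ ε := by
        rw [div_mul_eq_mul_div, div_le_iff₀ (by linarith)]
        nlinarith
      linarith
    simpa using norm_le_zero_iff.mp this
  -- integration against smooth compactly supported test functions
  have hae : ∀ᵐ y : ℝ ∂(volume : Measure ℝ), h y = 0 := by
    refine ae_eq_zero_of_integral_contDiff_smul_eq_zero hinth.locallyIntegrable ?_
    intro g hgd hgs
    have hgc : Continuous g := hgd.continuous
    set ge : ℝ → ℝ := fun y => (g y + g (-y)) / 2 with hgedef
    have hgec : Continuous ge := (hgc.add (hgc.comp continuous_neg)).div_const 2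
    -- a support radius
    obtain ⟨r, hr⟩ := hgs.isBounded.subset_closedBall 0
    set R : ℝ := |r| + 1 with hRdef
    have hR0 : 0 < R := by positivity
    have hg0 : ∀ x : ℝ, R ≤ |x| → g x = 0 := by
      intro x hx
      by_contra hne
      have hmem : x ∈ tsupport g := subset_tsupport g (by simpa using hne)
      have := hr hmem
      rw [Metric.mem_closedBall, Real.dist_eq, sub_zero] at this
      have : |x| ≤ |r| := le_trans this (le_abs_self r)
      linarith
    have hge0 : ∀ x : ℝ, R ≤ |x| → ge x = 0 := by
      intro x hx
      have h1 := hg0 x hx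
      have h2 := hg0 (-x) (by simpa using hx)
      simp [hgedef, h1, h2]
    -- the transferred function on [0,1]
    set Φ : ℝ → ℝ := fun t => ge (Real.sqrt (1 / t - 1)) * Real.sqrt (1 / t) with hΦdef
    have hΦzero : ∀ t : ℝ, t < (1 + R ^ 2)⁻¹ → Φ t = 0 := by
      intro t ht
      rcases le_or_gt t 0 with h0 | h0
      · have : Real.sqrt (1 / t) = 0 := by
          rw [Real.sqrt_eq_zero']
          rcases lt_or_eq_of_le h0 with h0' | h0'
          · exact le_of_lt (by exact div_neg_of_pos_of_neg one_pos h0')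
          · subst h0'; norm_num
        show ge (Real.sqrt (1 / t - 1)) * Real.sqrt (1 / t) = 0
        rw [this, mul_zero]
      · have hbase : (0:ℝ) < 1 + R ^ 2 := by positivity
        have h1t : 1 + R ^ 2 < 1 / t := by
          rw [lt_div_iff₀ h0]
          calc (1 + R ^ 2) * t < (1 + R ^ 2) * (1 + R ^ 2)⁻¹ := by
                exact mul_lt_mul_of_pos_left ht hbase
            _ = 1 := mul_inv_cancel₀ hbase.ne'
        have hsq : R ≤ Real.sqrt (1 / t - 1) := by
          have : R ^ 2 ≤ 1 / t - 1 := by linarith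
          calc R = Real.sqrt (R ^ 2) := by rw [Real.sqrt_sq hR0.le]
            _ ≤ Real.sqrt (1 / t - 1) := Real.sqrt_le_sqrt this
        have : ge (Real.sqrt (1 / t - 1)) = 0 :=
          hge0 _ (by rwa [abs_of_nonneg (Real.sqrt_nonneg _)])
        show ge (Real.sqrt (1 / t - 1)) * Real.sqrt (1 / t) = 0
        rw [this, zero_mul]
    have hΦcont : ContinuousOn Φ (Set.Icc 0 1) := by
      intro t ht
      rcases eq_or_lt_of_le ht.1 with h0 | h0
      · refine ContinuousAt.continuousWithinAt ?_
        have hδ : (0:ℝ) < (1 + R ^ 2)⁻¹ := by positivity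
        have hev : (fun _ : ℝ => (0:ℝ)) =ᶠ[nhds t] Φ := by
          refine Filter.eventually_of_mem (Iio_mem_nhds ?_) fun s hs => (hΦzero s hs).symm
          rw [← h0]; exact hδ
        exact continuousAt_const.congr hev
      · refine ContinuousAt.continuousWithinAt ?_
        have h1 : ContinuousAt (fun s : ℝ => 1 / s) t := by
          exact (continuousAt_const.div continuousAt_id h0.ne')
        exact ((hgec.continuousAt.comp
            ((Real.continuous_sqrt.continuousAt).comp (h1.sub continuousAt_const))).mul
          ((Real.continuous_sqrt.continuousAt).comp h1))
    -- pointwise identity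
    have hkey : ∀ y : ℝ, Φ ((1 + y ^ 2 : ℝ)⁻¹) * ((1 + y ^ 2 : ℝ) ^ (-(1:ℝ) / 2)) = ge y := by
      intro y
      have hb := base_pos y
      have h1 : (1:ℝ) / (1 + y ^ 2 : ℝ)⁻¹ = 1 + y ^ 2 := by
        rw [one_div, inv_inv]
      have h2 : Real.sqrt ((1 + y ^ 2 : ℝ) - 1) = |y| := by
        rw [show (1 + y ^ 2 : ℝ) - 1 = y ^ 2 by ring, Real.sqrt_sq_eq_abs]
      have h3 : ge |y| = ge y := by
        rcases abs_cases y with ⟨h, _⟩ | ⟨h, _⟩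
        · rw [h]
        · rw [h]; simp [hgedef, add_comm]
      rw [hΦdef]
      simp only [h1, h2]
      rw [mul_assoc, sqrt_mul_w, mul_one, h3]
    have h0 := hPhi Φ hΦcont
    have hrw : (∫ y : ℝ, ((Φ ((1 + y ^ 2 : ℝ)⁻¹) : ℝ) : ℂ)
        * (((1 + y ^ 2 : ℝ) ^ (-(1:ℝ) / 2) : ℝ) : ℂ) * h y)
        = ∫ y : ℝ, ((ge y : ℝ) : ℂ) * h y := by
      congr 1
      funext y
      rw [← Complex.ofReal_mul, hkey y]
    have hge_int : (∫ y : ℝ, ((ge y : ℝ) : ℂ) * h y) = 0 := by rw [← hrw, h0]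
    -- relate to the original g
    obtain ⟨C, hC⟩ := hgs.exists_bound_of_continuous hgc
    have hCabs : ∀ y, |g y| ≤ C := fun y => by simpa using hC y
    have hint1 : Integrable fun y : ℝ => ((g y : ℝ) : ℂ) * h y := key_int g C hgc hCabs
    have hint2 : Integrable fun y : ℝ => ((g (-y) : ℝ) : ℂ) * h y :=
      key_int (fun y => g (-y)) C (hgc.comp continuous_neg) fun y => hCabs (-y)
    have hneg : (∫ y : ℝ, ((g (-y) : ℝ) : ℂ) * h y) = ∫ y : ℝ, ((g y : ℝ) : ℂ) * h y := by
      rw [← integral_neg_eq_self (fun y : ℝ => ((g (-y) : ℝ) : ℂ) * h y) volume]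
      simp only [neg_neg]
      congr 1
      funext y
      rw [heven]
    have hsplit : (∫ y : ℝ, ((ge y : ℝ) : ℂ) * h y)
        = ((∫ y : ℝ, ((g y : ℝ) : ℂ) * h y) + ∫ y : ℝ, ((g (-y) : ℝ) : ℂ) * h y) / 2 := by
      have heq2 : (fun y : ℝ => ((ge y : ℝ) : ℂ) * h y)
          = fun y : ℝ => (((g y : ℝ) : ℂ) * h y + ((g (-y) : ℝ) : ℂ) * h y) / 2 := by
        funext y; rw [hgedef]; push_cast; ring
      rw [heq2, MeasureTheory.integral_div, integral_add hint1 hint2]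
    have hI : (∫ y : ℝ, ((g y : ℝ) : ℂ) * h y) = 0 := by
      rw [hsplit, hneg] at hge_int
      linear_combination hge_int
    simpa [Complex.real_smul] using hI
  -- conclude
  have hzero : h = fun _ => 0 := (hconth.ae_eq_iff_eq volume continuous_zero).mp hae
  intro y
  exact congrFun hzero y
end

section
/- With H_D = diag(E,0), L_D = H_D⊗1 - 1⊗H_D on ℂ²⊗ℂ², J_D = E∘(C⊗C) where C is componentwise complex conjugation and E the swap operator, and |β,D⟩ = (1+e^{-βE})^{-1/2}(|-⟩⊗|-⟩ + e^{-βE/2}|+⟩⊗|+⟩), one has for every 2×2 matrix B: e^{-βL_D/2}(B⊗1)|β,D⟩ = J_D (B*⊗1)|β,D⟩. -/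
open Matrix

/-- The KMS condition for the free detector: with `H_D = diag(E, 0)`,
`L_D = H_D⊗1 - 1⊗H_D` acting on `ℂ²⊗ℂ²` (realized as `Fin 2 × Fin 2 → ℂ`, index
`0 ↔ |+⟩`, `1 ↔ |-⟩`), the modular conjugation `J_D = E∘(C⊗C)` (swap composed with
componentwise complex conjugation), and
`|β,D⟩ = (1+e^{-βE})^{-1/2}( |-⟩⊗|-⟩ + e^{-βE/2} |+⟩⊗|+⟩ )`, one has
`e^{-βL_D/2}(B⊗1)|β,D⟩ = J_D (B*⊗1)|β,D⟩` for every `2×2` matrix `B`. -/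
theorem stmt12 (E β : ℝ) (hE : 0 < E) (hβ : 0 < β)
    (HD : Matrix (Fin 2) (Fin 2) ℂ) (hHD : HD = !![(E : ℂ), 0; 0, 0])
    (LD : Matrix (Fin 2 × Fin 2) (Fin 2 × Fin 2) ℂ)
    (hLD : LD = fun p q => HD p.1 q.1 * (if p.2 = q.2 then 1 else 0) -
      (if p.1 = q.1 then 1 else 0) * HD p.2 q.2)
    (tens : Matrix (Fin 2) (Fin 2) ℂ → Matrix (Fin 2 × Fin 2) (Fin 2 × Fin 2) ℂ)
    (htens : tens = fun B p q => B p.1 q.1 * (if p.2 = q.2 then 1 else 0))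
    (JD : (Fin 2 × Fin 2 → ℂ) → Fin 2 × Fin 2 → ℂ)
    (hJD : JD = fun v p => (starRingEnd ℂ) (v (p.2, p.1)))
    (c : ℂ) (hc : c = (((1 + Real.exp (-β * E)) ^ (-(1 : ℝ) / 2) : ℝ) : ℂ))
    (βD : Fin 2 × Fin 2 → ℂ)
    (hβD : βD = fun p => if p = (0, 0) then c * Complex.exp (-(β * E) / 2)
      else if p = (1, 1) then c else 0)
    (B : Matrix (Fin 2) (Fin 2) ℂ) :
    (NormedSpace.exp ((-(β : ℂ) / 2) • LD)).mulVec ((tens B).mulVec βD) =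
      JD ((tens Bᴴ).mulVec βD) := by
  have hd : (-(β : ℂ) / 2) • LD =
      Matrix.diagonal (fun p : Fin 2 × Fin 2 =>
        (-(β : ℂ) / 2) * (HD p.1 p.1 - HD p.2 p.2)) := by
    subst hLD hHD
    ext ⟨i, j⟩ ⟨k, l⟩
    erw [Matrix.smul_apply]
    fin_cases i <;> fin_cases j <;> fin_cases k <;> fin_cases l <;>
      simp [Matrix.diagonal] <;> ring
  rw [hd, Matrix.exp_diagonal, Pi.exp_def]
  simp_rw [← Complex.exp_eq_exp_ℂ]
  subst hHD htens hJD hβD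
  have hcc : (starRingEnd ℂ) c = c := by rw [hc]; exact Complex.conj_ofReal _
  ext ⟨i, j⟩
  have h0 : (-((β:ℂ) * E) / 2 + -(-(β:ℂ) / 2 * E) : ℂ) = 0 := by ring
  fin_cases i <;> fin_cases j <;>
    simp [Matrix.mulVec, dotProduct, Fintype.sum_prod_type, Fin.sum_univ_two,
      Matrix.diagonal, _root_.map_mul, hcc, ← Complex.exp_conj, map_neg, map_div₀,
      map_ofNat, Complex.conj_ofReal]
  · ring_nf
  · rw [show ∀ a b : ℂ, Complex.exp a * (b * (c * Complex.exp (-(↑β * ↑E) / 2))) =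
        b * c * (Complex.exp (-(↑β * ↑E) / 2) * Complex.exp a) from fun a b => by ring,
      ← Complex.exp_add, h0, Complex.exp_zero, mul_one]
end
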